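/- Let k = ℚ(√Δ) be an imaginary quadratic field with Δ < 0 a squarefree integer, and let O_k be its ring of integers. Suppose χ : ℕ → ℤ is completely multiplicative (χ(1) = 1 and χ(m·n) = χ(m)·χ(n) for all m, n) and satisfies, for every prime p: χ(p) = 1 if p is split in k, χ(p) = 0 if p is ramified in k, and χ(p) = −1 if p is inert in k. Then for every integer N ≥ 1, the number of nonzero ideals of O_k of absolute norm N equals the sum of χ(a) over the positive divisors a of N. -/

import Mathlib

set_option maxHeartbeats 800000
set_option synthInstance.maxHeartbeats 200000

open NumberField Ideal Polynomial IntermediateField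

section Aux

variable {K : Type*} [Field K] [NumberField K]

lemma aux_sup_top {A B : Ideal (𝓞 K)} (h : Nat.Coprime (Ideal.absNorm A) (Ideal.absNorm B)) :
    A ⊔ B = ⊤ := by
  by_contra hne
  obtain ⟨M, hM, hle⟩ := Ideal.exists_le_maximal _ hne
  have h1 : Ideal.absNorm M ∣ Ideal.absNorm A :=
    Ideal.absNorm_dvd_absNorm_of_le (le_trans le_sup_left hle)
  have h2 : Ideal.absNorm M ∣ Ideal.absNorm B :=
    Ideal.absNorm_dvd_absNorm_of_le (le_trans le_sup_right hle)
  have : Ideal.absNorm M = 1 := Nat.dvd_one.mp (h ▸ Nat.dvd_gcd h1 h2)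
  exact hM.ne_top (Ideal.absNorm_eq_one_iff.mp this)

lemma aux_norm_span_natCast (n : ℕ) :
    Ideal.absNorm (Ideal.span {(n : 𝓞 K)}) = n ^ Module.finrank ℚ K := by
  have hb := Module.Free.chooseBasis ℤ (𝓞 K)
  rw [Ideal.absNorm_span_singleton]
  have h1 : (n : 𝓞 K) = algebraMap ℤ (𝓞 K) (n : ℤ) := by simp
  rw [h1, Algebra.norm_algebraMap_of_basis hb, ← Module.finrank_eq_card_basis hb,
    NumberField.RingOfIntegers.rank, Int.natAbs_pow]
  simp

lemma aux_m_part {m n : ℕ} (hmn : Nat.Coprime m n) {A B : Ideal (𝓞 K)}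
    (hA : Ideal.absNorm A = m) (hB : Ideal.absNorm B = n) :
    A * B ⊔ Ideal.span {(m : 𝓞 K)} = A := by
  have hmem : (m : 𝓞 K) ∈ A := by
    rw [← hA]; exact_mod_cast Ideal.absNorm_mem A
  apply le_antisymm
  · exact sup_le Ideal.mul_le_left ((Ideal.span_singleton_le_iff_mem _).mpr hmem)
  · have htop : B ⊔ Ideal.span {(m : 𝓞 K)} = ⊤ := by
      apply aux_sup_top
      rw [hB, aux_norm_span_natCast]
      exact (hmn.symm).pow_right _
    calc A = A * (B ⊔ Ideal.span {(m : 𝓞 K)}) := by rw [htop, Ideal.mul_top]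
    _ = A * B ⊔ A * Ideal.span {(m : 𝓞 K)} := Ideal.mul_sup _ _ _
    _ ≤ A * B ⊔ Ideal.span {(m : 𝓞 K)} := sup_le_sup_left Ideal.mul_le_right _

lemma aux_decomp {m n : ℕ} (hmn : Nat.Coprime m n)
    {I : Ideal (𝓞 K)} (hI : I ≠ ⊥) (hN : Ideal.absNorm I = m * n) :
    Ideal.absNorm (I ⊔ Ideal.span {(m : 𝓞 K)}) = m ∧
    Ideal.absNorm (I ⊔ Ideal.span {(n : 𝓞 K)}) = n ∧
    (I ⊔ Ideal.span {(m : 𝓞 K)}) * (I ⊔ Ideal.span {(n : 𝓞 K)}) = I := by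
  set A := I ⊔ Ideal.span {(m : 𝓞 K)} with hAdef
  set B := I ⊔ Ideal.span {(n : 𝓞 K)} with hBdef
  have hAne : A ≠ ⊥ := fun h => hI (le_bot_iff.mp (h ▸ (le_sup_left : I ≤ A)))
  have hBne : B ≠ ⊥ := fun h => hI (le_bot_iff.mp (h ▸ (le_sup_left : I ≤ B)))
  have htop : A ⊔ B = ⊤ := by
    rw [Ideal.eq_top_iff_one]
    obtain ⟨u, v, huv⟩ := (Nat.isCoprime_iff_coprime.mpr hmn)
    have h1 : ((u : 𝓞 K)) * (m : 𝓞 K) + ((v : 𝓞 K)) * (n : 𝓞 K) = 1 := by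
      exact_mod_cast congrArg (fun z : ℤ => (z : 𝓞 K)) huv
    rw [← h1]
    exact Submodule.add_mem_sup
      (Ideal.mul_mem_left _ _ (le_sup_right (α := Ideal (𝓞 K))
        (Ideal.subset_span (Set.mem_singleton _))))
      (Ideal.mul_mem_left _ _ (le_sup_right (α := Ideal (𝓞 K))
        (Ideal.subset_span (Set.mem_singleton _))))
  have hABI : A * B = I := by
    apply le_antisymm
    · rw [hAdef, hBdef, Ideal.sup_mul, Ideal.mul_sup, Ideal.mul_sup,
        Ideal.span_singleton_mul_span_singleton]
      have hmn_mem : (m : 𝓞 K) * (n : 𝓞 K) ∈ I := by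
        have : ((m * n : ℕ) : 𝓞 K) ∈ I := by rw [← hN]; exact_mod_cast Ideal.absNorm_mem I
        push_cast at this; exact this
      exact sup_le (sup_le Ideal.mul_le_right Ideal.mul_le_left)
        (sup_le Ideal.mul_le_right ((Ideal.span_singleton_le_iff_mem _).mpr hmn_mem))
    · rw [Ideal.mul_eq_inf_of_coprime htop]
      exact le_inf le_sup_left le_sup_left
  have hprod : Ideal.absNorm A * Ideal.absNorm B = m * n := by
    rw [← _root_.map_mul, hABI, hN]
  have hAd : Ideal.absNorm A ∣ m ^ Module.finrank ℚ K := by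
    rw [← aux_norm_span_natCast]
    exact Ideal.absNorm_dvd_absNorm_of_le le_sup_right
  have hBd : Ideal.absNorm B ∣ n ^ Module.finrank ℚ K := by
    rw [← aux_norm_span_natCast]
    exact Ideal.absNorm_dvd_absNorm_of_le le_sup_right
  have copA : Nat.Coprime (Ideal.absNorm A) n :=
    Nat.Coprime.coprime_dvd_left hAd (hmn.pow_left _)
  have copB : Nat.Coprime (Ideal.absNorm B) m :=
    Nat.Coprime.coprime_dvd_left hBd (hmn.symm.pow_left _)
  have hAm : Ideal.absNorm A ∣ m :=
    copA.dvd_of_dvd_mul_right ⟨Ideal.absNorm B, hprod.symm⟩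
  have hBn : Ideal.absNorm B ∣ n := by
    apply copB.dvd_of_dvd_mul_left
    exact ⟨Ideal.absNorm A, by rw [← hprod]; ring⟩
  obtain ⟨c, hc⟩ := hAm
  obtain ⟨e, he⟩ := hBn
  have hne : Ideal.absNorm A * Ideal.absNorm B ≠ 0 := by
    simp [Ideal.absNorm_eq_zero_iff, hAne, hBne]
  have hce : c * e = 1 := by
    have hkey : (Ideal.absNorm A * Ideal.absNorm B) * (c * e)
        = (Ideal.absNorm A * Ideal.absNorm B) * 1 := by
      calc Ideal.absNorm A * Ideal.absNorm B * (c * e)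
          = (Ideal.absNorm A * c) * (Ideal.absNorm B * e) := by ring
        _ = m * n := by rw [← hc, ← he]
        _ = (Ideal.absNorm A * Ideal.absNorm B) * 1 := by rw [mul_one, hprod]
    exact Nat.eq_of_mul_eq_mul_left (Nat.pos_of_ne_zero hne) hkey
  have hc1 : c = 1 := Nat.eq_one_of_mul_eq_one_right hce
  have he1 : e = 1 := Nat.eq_one_of_mul_eq_one_left hce
  subst hc1; subst he1
  simp only [mul_one] at hc he
  exact ⟨hc.symm, he.symm, hABI⟩


lemma aux_card_mul {m n : ℕ} (hmn : Nat.Coprime m n) :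
    Nat.card {I : Ideal (𝓞 K) // I ≠ ⊥ ∧ Ideal.absNorm I = m * n}
      = Nat.card {I : Ideal (𝓞 K) // I ≠ ⊥ ∧ Ideal.absNorm I = m}
        * Nat.card {I : Ideal (𝓞 K) // I ≠ ⊥ ∧ Ideal.absNorm I = n} := by
  rw [← Nat.card_prod]
  refine Nat.card_congr ?_
  refine
    { toFun := fun I =>
        (⟨I.1 ⊔ Ideal.span {(m : 𝓞 K)},
          fun h => I.2.1 (le_bot_iff.mp (le_trans (le_sup_left : I.1 ≤ _) h.le)),
          (aux_decomp hmn I.2.1 I.2.2).1⟩,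
        ⟨I.1 ⊔ Ideal.span {(n : 𝓞 K)},
          fun h => I.2.1 (le_bot_iff.mp (le_trans (le_sup_left : I.1 ≤ _) h.le)),
          (aux_decomp hmn I.2.1 I.2.2).2.1⟩),
      invFun := fun AB =>
        ⟨AB.1.1 * AB.2.1,
          fun h => by
            rcases Ideal.mul_eq_bot.mp h with h' | h'
            exacts [AB.1.2.1 h', AB.2.2.1 h'],
          by rw [_root_.map_mul, AB.1.2.2, AB.2.2.2]⟩,
      left_inv := fun I => Subtype.ext (aux_decomp hmn I.2.1 I.2.2).2.2,
      right_inv := fun AB => by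
        obtain ⟨⟨A, hA⟩, ⟨B, hB⟩⟩ := AB
        refine Prod.ext (Subtype.ext ?_) (Subtype.ext ?_)
        · exact aux_m_part hmn hA.2 hB.2
        · show A * B ⊔ _ = B
          rw [mul_comm]
          exact aux_m_part hmn.symm hB.2 hA.2 }

lemma aux_finrank (Δ : ℤ) (hΔneg : Δ < 0)
    (α : K) (hα : α ^ 2 = (Δ : K)) (hgen : Algebra.adjoin ℚ {α} = ⊤) :
    Module.finrank ℚ K = 2 := by
  have hroot : Polynomial.aeval α ((X : ℚ[X]) ^ 2 - C (Δ : ℚ)) = 0 := by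
    simp [hα]
  have hmono : ((X : ℚ[X]) ^ 2 - C (Δ : ℚ)).Monic := monic_X_pow_sub_C _ (by norm_num)
  have hint : IsIntegral ℚ α := ⟨(X : ℚ[X]) ^ 2 - C (Δ : ℚ), hmono, hroot⟩
  have htop : ℚ⟮α⟯ = (⊤ : IntermediateField ℚ K) := by
    apply IntermediateField.toSubalgebra_injective
    rw [IntermediateField.adjoin_simple_toSubalgebra_of_isAlgebraic hint.isAlgebraic, hgen]
    rfl
  have h1 : Module.finrank ℚ K = (minpoly ℚ α).natDegree := by
    rw [← IntermediateField.adjoin.finrank hint, htop, IntermediateField.finrank_top']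
  have hdvd : minpoly ℚ α ∣ (X : ℚ[X]) ^ 2 - C (Δ : ℚ) := minpoly.dvd ℚ α hroot
  have hle : (minpoly ℚ α).natDegree ≤ 2 := by
    have h2 := Polynomial.natDegree_le_of_dvd hdvd hmono.ne_zero
    rwa [natDegree_X_pow_sub_C] at h2
  have hpos : 0 < (minpoly ℚ α).natDegree := minpoly.natDegree_pos hint
  have hne1 : (minpoly ℚ α).natDegree ≠ 1 := by
    intro h1d
    obtain ⟨r, hr⟩ := minpoly.natDegree_eq_one_iff.mp h1d
    have hrsq : (r : ℚ) ^ 2 = (Δ : ℚ) := by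
      apply (algebraMap ℚ K).injective
      rw [map_pow, hr, map_intCast, hα]
    have hΔnonneg : (0 : ℚ) ≤ (Δ : ℚ) := hrsq ▸ sq_nonneg r
    have hΔint : (0 : ℤ) ≤ Δ := by exact_mod_cast hΔnonneg
    omega
  omega

lemma aux_nat_fac {p a b : ℕ} (hp : p.Prime) (h : a * b = p ^ 2) (ha : a ≠ 1) (hb : b ≠ 1) :
    a = p ∧ b = p := by
  obtain ⟨i, hi, rfl⟩ := (Nat.dvd_prime_pow hp).mp ⟨b, h.symm⟩
  interval_cases i
  · simp at ha
  · rw [pow_one] at h ⊢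
    have hb' : p * b = p * p := by rw [h]; ring
    exact ⟨rfl, Nat.eq_of_mul_eq_mul_left hp.pos hb'⟩
  · exact absurd (Nat.eq_of_mul_eq_mul_left (pow_pos hp.pos 2) (by rw [h, mul_one])) hb

lemma aux_dvd_of_norm_pp {p : ℕ} {e : ℕ} {I : Ideal (𝓞 K)}
    (hI : Ideal.absNorm I = p ^ e) : I ∣ Ideal.span {(p : 𝓞 K)} ^ e := by
  rw [Ideal.dvd_iff_le, Ideal.span_singleton_pow]
  apply (Ideal.span_singleton_le_iff_mem _).mpr
  have h1 : ((p ^ e : ℕ) : 𝓞 K) ∈ I := by rw [← hI]; exact_mod_cast Ideal.absNorm_mem I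
  push_cast at h1
  exact h1

lemma aux_classify (hrk : Module.finrank ℚ K = 2) {p : ℕ} (hp : p.Prime) :
    (∃ P Q : Ideal (𝓞 K), Prime P ∧ Prime Q ∧ P ≠ Q ∧
        Ideal.span {(p : 𝓞 K)} = P * Q ∧ Ideal.absNorm P = p ∧ Ideal.absNorm Q = p) ∨
    (∃ P : Ideal (𝓞 K), Prime P ∧ Ideal.span {(p : 𝓞 K)} = P ^ 2 ∧ Ideal.absNorm P = p) ∨
    ((Ideal.span {(p : 𝓞 K)}).IsPrime) := by
  have hnorm : Ideal.absNorm (Ideal.span {(p : 𝓞 K)}) = p ^ 2 := by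
    rw [aux_norm_span_natCast, hrk]
  have hbot : Ideal.span {(p : 𝓞 K)} ≠ ⊥ := by
    intro h
    rw [h, Ideal.absNorm_bot] at hnorm
    exact (pow_pos hp.pos 2).ne' hnorm.symm
  have htop : Ideal.span {(p : 𝓞 K)} ≠ ⊤ := by
    intro h
    rw [h, Ideal.absNorm_top] at hnorm
    have := hp.one_lt
    nlinarith [hnorm]
  set s := UniqueFactorizationMonoid.normalizedFactors (Ideal.span {(p : 𝓞 K)}) with hs
  have hsprod : s.prod = Ideal.span {(p : 𝓞 K)} := Ideal.prod_normalizedFactors_eq_self hbot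
  have hmapprod : (s.map Ideal.absNorm).prod = p ^ 2 := by
    rw [← hnorm, ← hsprod, ← map_multiset_prod]
  have hmem_norm : ∀ x ∈ s, p ≤ Ideal.absNorm x := by
    intro x hx
    have hxp : Prime x := UniqueFactorizationMonoid.prime_of_normalized_factor x hx
    have hdvd : Ideal.absNorm x ∣ p ^ 2 := by
      rw [← hnorm]
      exact map_dvd Ideal.absNorm (Multiset.dvd_prod hx |>.trans hsprod.dvd)
    obtain ⟨i, hi, hxi⟩ := (Nat.dvd_prime_pow hp).mp hdvd
    have hne1 : Ideal.absNorm x ≠ 1 := fun h1 =>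
      hxp.not_unit (Ideal.isUnit_iff.mpr (Ideal.absNorm_eq_one_iff.mp h1))
    rcases Nat.eq_zero_or_pos i with rfl | hip
    · exact absurd (by simpa using hxi) hne1
    · rw [hxi]
      calc p = p ^ 1 := (pow_one p).symm
      _ ≤ p ^ i := Nat.pow_le_pow_right hp.pos hip
  have hcard2 : Multiset.card s ≤ 2 := by
    have h1 : p ^ Multiset.card s ≤ p ^ 2 := by
      rw [← hmapprod]
      have := Multiset.pow_card_le_prod (s := s.map Ideal.absNorm) (a := p)
        (by intro x hx; obtain ⟨y, hy, rfl⟩ := Multiset.mem_map.mp hx; exact hmem_norm y hy)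
      simpa using this
    exact (Nat.pow_le_pow_iff_right hp.one_lt).mp h1
  have hcard1 : 1 ≤ Multiset.card s := by
    rcases Nat.eq_zero_or_pos (Multiset.card s) with h0 | h
    · exact absurd (by rw [← hsprod, Multiset.card_eq_zero.mp h0, Multiset.prod_zero,
        Ideal.one_eq_top]) htop
    · exact h
  have hcases : Multiset.card s = 1 ∨ Multiset.card s = 2 := by omega
  rcases hcases with hc | hc
  · obtain ⟨P, hP⟩ := Multiset.card_eq_one.mp hc
    have hPp : Prime P := UniqueFactorizationMonoid.prime_of_normalized_factor P
      (by rw [← hs, hP]; simp)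
    right; right
    rw [← hsprod, hP, Multiset.prod_singleton]
    exact Ideal.isPrime_of_prime hPp
  · obtain ⟨P, Q, hPQs⟩ := Multiset.card_eq_two.mp hc
    have hPp : Prime P := UniqueFactorizationMonoid.prime_of_normalized_factor P
      (by rw [← hs, hPQs]; simp)
    have hQp : Prime Q := UniqueFactorizationMonoid.prime_of_normalized_factor Q
      (by rw [← hs, hPQs]; simp)
    have hprodPQ : Ideal.span {(p : 𝓞 K)} = P * Q := by
      rw [← hsprod, hPQs]; simp
    have hPn1 : Ideal.absNorm P ≠ 1 := fun h1 =>
      hPp.not_unit (Ideal.isUnit_iff.mpr (Ideal.absNorm_eq_one_iff.mp h1))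
    have hQn1 : Ideal.absNorm Q ≠ 1 := fun h1 =>
      hQp.not_unit (Ideal.isUnit_iff.mpr (Ideal.absNorm_eq_one_iff.mp h1))
    have hmul : Ideal.absNorm P * Ideal.absNorm Q = p ^ 2 := by
      rw [← _root_.map_mul, ← hprodPQ, hnorm]
    obtain ⟨hPn, hQn⟩ := aux_nat_fac hp hmul hPn1 hQn1
    by_cases hPQ : P = Q
    · right; left
      exact ⟨P, hPp, by rw [hprodPQ, hPQ, sq], hPn⟩
    · left
      exact ⟨P, Q, hPp, hQp, hPQ, hprodPQ, hPn, hQn⟩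

lemma aux_card_split {p : ℕ} (hp : p.Prime) {P Q : Ideal (𝓞 K)} (hPp : Prime P) (hQp : Prime Q)
    (hPQ : P ≠ Q) (hspan : Ideal.span {(p : 𝓞 K)} = P * Q)
    (hPn : Ideal.absNorm P = p) (hQn : Ideal.absNorm Q = p) (e : ℕ) :
    Nat.card {I : Ideal (𝓞 K) // I ≠ ⊥ ∧ Ideal.absNorm I = p ^ e} = e + 1 := by
  have hPQd : ¬ P ∣ Q := fun h =>
    hPQ (associated_iff_eq.mp (hPp.associated_of_dvd hQp h))
  have hnorm : ∀ i : ℕ, i ≤ e →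
      Ideal.absNorm (P ^ i * Q ^ (e - i)) = p ^ e := by
    intro i hi
    rw [_root_.map_mul, map_pow, map_pow, hPn, hQn, ← pow_add]
    congr 1
    omega
  have hnebot : ∀ i : ℕ, P ^ i * Q ^ (e - i) ≠ ⊥ := by
    intro i h
    rw [← Submodule.zero_eq_bot] at h
    exact (mul_ne_zero (pow_ne_zero _ hPp.ne_zero) (pow_ne_zero _ hQp.ne_zero)) h
  set g : Fin (e + 1) → {I : Ideal (𝓞 K) // I ≠ ⊥ ∧ Ideal.absNorm I = p ^ e} :=
    fun i => ⟨P ^ (i : ℕ) * Q ^ (e - (i : ℕ)), hnebot _, hnorm _ (Nat.lt_succ_iff.mp i.isLt)⟩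
    with hg
  have hle : ∀ a b : ℕ, a ≤ e → b ≤ e → P ^ a * Q ^ (e - a) = P ^ b * Q ^ (e - b) → b ≤ a := by
    intro a b ha hb heq
    have hdvd : P ^ b ∣ P ^ a * Q ^ (e - a) := by
      rw [heq]
      exact dvd_mul_right _ _
    have hnd : ¬ P ∣ Q ^ (e - a) := fun h => hPQd (hPp.dvd_of_dvd_pow h)
    have h2 : P ^ b ∣ P ^ a := hPp.pow_dvd_of_dvd_mul_right b hnd hdvd
    have h3 : p ^ b ∣ p ^ a := by
      have := map_dvd Ideal.absNorm h2
      rwa [map_pow, map_pow, hPn] at this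
    exact (Nat.pow_dvd_pow_iff_le_right hp.one_lt).mp h3
  have hinj : Function.Injective g := by
    intro i j hij
    have heq : P ^ (i : ℕ) * Q ^ (e - (i : ℕ)) = P ^ (j : ℕ) * Q ^ (e - (j : ℕ)) :=
      congrArg Subtype.val hij
    have h1 := hle _ _ (Nat.lt_succ_iff.mp i.isLt) (Nat.lt_succ_iff.mp j.isLt) heq
    have h2 := hle _ _ (Nat.lt_succ_iff.mp j.isLt) (Nat.lt_succ_iff.mp i.isLt) heq.symm
    exact Fin.ext (le_antisymm h2 h1)
  have hsurj : Function.Surjective g := by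
    rintro ⟨I, hIb, hIn⟩
    have hdvd : I ∣ P ^ e * Q ^ e := by
      have := aux_dvd_of_norm_pp (K := K) hIn
      rwa [hspan, mul_pow] at this
    obtain ⟨A, B, hA, hB, hIAB⟩ := exists_dvd_and_dvd_of_dvd_mul hdvd
    obtain ⟨i, hi, hAi⟩ := (dvd_prime_pow hPp e).mp hA
    obtain ⟨j, hj, hBj⟩ := (dvd_prime_pow hQp e).mp hB
    rw [associated_iff_eq] at hAi hBj
    subst hAi hBj hIAB
    have hije : i + j = e := by
      have hpe : p ^ (i + j) = p ^ e := by
        rw [← hIn, _root_.map_mul, map_pow, map_pow, hPn, hQn, ← pow_add]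
      exact Nat.pow_right_injective hp.two_le hpe
    have hj' : e - i = j := by omega
    refine ⟨⟨i, by omega⟩, ?_⟩
    apply Subtype.ext
    show P ^ i * Q ^ (e - i) = P ^ i * Q ^ j
    rw [hj']
  rw [Nat.card_congr (Equiv.ofBijective g ⟨hinj, hsurj⟩).symm, Nat.card_eq_fintype_card,
    Fintype.card_fin]

lemma aux_card_ram {p : ℕ} (hp : p.Prime) {P : Ideal (𝓞 K)} (hPp : Prime P)
    (hspan : Ideal.span {(p : 𝓞 K)} = P ^ 2) (hPn : Ideal.absNorm P = p) (e : ℕ) :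
    Nat.card {I : Ideal (𝓞 K) // I ≠ ⊥ ∧ Ideal.absNorm I = p ^ e} = 1 := by
  rw [Nat.card_eq_one_iff_unique]
  constructor
  · constructor
    rintro ⟨I, hIb, hIn⟩ ⟨J, hJb, hJn⟩
    have key : ∀ I : Ideal (𝓞 K), I ≠ ⊥ → Ideal.absNorm I = p ^ e → I = P ^ e := by
      intro I hIb hIn
      have hdvd : I ∣ P ^ (2 * e) := by
        have := aux_dvd_of_norm_pp (K := K) hIn
        rwa [hspan, ← pow_mul] at this
      obtain ⟨i, hi, hAi⟩ := (dvd_prime_pow hPp _).mp hdvd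
      rw [associated_iff_eq] at hAi
      subst hAi
      have : p ^ i = p ^ e := by rw [← hIn, map_pow, hPn]
      rw [Nat.pow_right_injective hp.two_le this]
    simp only [Subtype.mk_eq_mk]
    rw [key I hIb hIn, key J hJb hJn]
  · refine ⟨⟨P ^ e, ?_, by rw [map_pow, hPn]⟩⟩
    rw [← Submodule.zero_eq_bot]
    exact pow_ne_zero _ hPp.ne_zero

lemma aux_card_inert {p : ℕ} (hp : p.Prime) (hpr : (Ideal.span {(p : 𝓞 K)}).IsPrime)
    (hnorm2 : Ideal.absNorm (Ideal.span {(p : 𝓞 K)}) = p ^ 2) (e : ℕ) :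
    Nat.card {I : Ideal (𝓞 K) // I ≠ ⊥ ∧ Ideal.absNorm I = p ^ e}
      = if Even e then 1 else 0 := by
  have hbot : Ideal.span {(p : 𝓞 K)} ≠ ⊥ := by
    intro h
    rw [h, Ideal.absNorm_bot] at hnorm2
    exact (pow_pos hp.pos 2).ne' hnorm2.symm
  have hPp : Prime (Ideal.span {(p : 𝓞 K)}) := Ideal.prime_of_isPrime hbot hpr
  have key : ∀ I : Ideal (𝓞 K), I ≠ ⊥ → Ideal.absNorm I = p ^ e →
      ∃ i : ℕ, 2 * i = e ∧ I = Ideal.span {(p : 𝓞 K)} ^ i := by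
    intro I hIb hIn
    obtain ⟨i, hi, hAi⟩ := (dvd_prime_pow hPp _).mp (aux_dvd_of_norm_pp (K := K) hIn)
    rw [associated_iff_eq] at hAi
    subst hAi
    refine ⟨i, ?_, rfl⟩
    have : p ^ (2 * i) = p ^ e := by
      rw [← hIn, map_pow, hnorm2, ← pow_mul]
    exact Nat.pow_right_injective hp.two_le this
  by_cases he : Even e
  · rw [if_pos he]
    obtain ⟨c, hc⟩ := he
    rw [Nat.card_eq_one_iff_unique]
    constructor
    · constructor
      rintro ⟨I, hIb, hIn⟩ ⟨J, hJb, hJn⟩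
      obtain ⟨i, hie, hI⟩ := key I hIb hIn
      obtain ⟨j, hje, hJ⟩ := key J hJb hJn
      have : i = j := by omega
      simp only [Subtype.mk_eq_mk]
      rw [hI, hJ, this]
    · refine ⟨⟨Ideal.span {(p : 𝓞 K)} ^ c, ?_, ?_⟩⟩
      · rw [← Submodule.zero_eq_bot]
        exact pow_ne_zero _ hPp.ne_zero
      · rw [map_pow, hnorm2, ← pow_mul]
        congr 1
        omega
  · rw [if_neg he]
    have : IsEmpty {I : Ideal (𝓞 K) // I ≠ ⊥ ∧ Ideal.absNorm I = p ^ e} := by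
      constructor
      rintro ⟨I, hIb, hIn⟩
      obtain ⟨i, hie, -⟩ := key I hIb hIn
      exact he ⟨i, by omega⟩
    exact Nat.card_of_isEmpty

end Aux

/-- For an imaginary quadratic field `k = ℚ(√Δ)` (`Δ < 0` squarefree) and a completely
multiplicative `χ : ℕ → ℤ` taking the value `1` at split primes, `0` at ramified primes
and `-1` at inert primes, the number of nonzero ideals of `O_k` of absolute norm `N`
equals `∑_{a ∣ N} χ(a)`. -/
theorem ideal_count_eq_divisor_sum
    (Δ : ℤ) (hΔneg : Δ < 0) (hΔsq : Squarefree Δ)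
    (K : Type*) [Field K] [NumberField K]
    (α : K) (hα : α ^ 2 = (Δ : K)) (hgen : Algebra.adjoin ℚ {α} = ⊤)
    (χ : ℕ → ℤ) (hχ1 : χ 1 = 1) (hχmul : ∀ m n : ℕ, χ (m * n) = χ m * χ n)
    (hsplit : ∀ p : ℕ, p.Prime →
      (∃ P Q : Ideal (𝓞 K), P.IsPrime ∧ Q.IsPrime ∧ P ≠ Q ∧
        Ideal.span {(p : 𝓞 K)} = P * Q) → χ p = 1)
    (hram : ∀ p : ℕ, p.Prime →
      (∃ P : Ideal (𝓞 K), P.IsPrime ∧ Ideal.span {(p : 𝓞 K)} = P ^ 2) → χ p = 0)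
    (hinert : ∀ p : ℕ, p.Prime →
      (Ideal.span {(p : 𝓞 K)}).IsPrime → χ p = -1) :
    ∀ N : ℕ, 1 ≤ N →
      (Nat.card {I : Ideal (𝓞 K) // I ≠ ⊥ ∧ Ideal.absNorm I = N} : ℤ)
        = ∑ a ∈ N.divisors, χ a := by
  have hrk : Module.finrank ℚ K = 2 := aux_finrank Δ hΔneg α hα hgen
  have hχpow : ∀ a i : ℕ, χ (a ^ i) = χ a ^ i := by
    intro a i
    induction i with
    | zero => simpa using hχ1
    | succ n ih => rw [pow_succ, pow_succ, hχmul, ih]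
  -- the ideal-counting arithmetic function
  set F : ArithmeticFunction ℤ :=
    ⟨fun N => (Nat.card {I : Ideal (𝓞 K) // I ≠ ⊥ ∧ Ideal.absNorm I = N} : ℤ), by
      have : IsEmpty {I : Ideal (𝓞 K) // I ≠ ⊥ ∧ Ideal.absNorm I = 0} :=
        ⟨fun I => I.2.1 (Ideal.absNorm_eq_zero_iff.mp I.2.2)⟩
      simp [Nat.card_of_isEmpty]⟩ with hF
  -- the divisor-sum arithmetic function
  set χa : ArithmeticFunction ℤ :=
    ⟨fun n => if n = 0 then 0 else χ n, by simp⟩ with hχa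
  set G : ArithmeticFunction ℤ := χa * (ArithmeticFunction.zeta : ArithmeticFunction ℕ)
    with hG
  have hχam : χa.IsMultiplicative := by
    constructor
    · simp [hχa, hχ1]
    · intro m n hmn
      rcases eq_or_ne m 0 with rfl | hm
      · rw [Nat.coprime_zero_left] at hmn
        subst hmn
        simp [hχa, hχ1]
      rcases eq_or_ne n 0 with rfl | hn
      · rw [Nat.coprime_zero_right] at hmn
        subst hmn
        simp [hχa, hχ1]
      simp only [hχa, ArithmeticFunction.coe_mk, if_neg hm, if_neg hn,
        if_neg (mul_ne_zero hm hn)]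
      exact hχmul m n
  have hFone : F 1 = 1 := by
    have h1 : Nat.card {I : Ideal (𝓞 K) // I ≠ ⊥ ∧ Ideal.absNorm I = 1} = 1 := by
      rw [Nat.card_eq_one_iff_unique]
      constructor
      · constructor
        rintro ⟨I, hIb, hIn⟩ ⟨J, hJb, hJn⟩
        simp only [Subtype.mk_eq_mk]
        rw [Ideal.absNorm_eq_one_iff.mp hIn, Ideal.absNorm_eq_one_iff.mp hJn]
      · exact ⟨⟨⊤, by simp, Ideal.absNorm_top⟩⟩
    show ((Nat.card {I : Ideal (𝓞 K) // I ≠ ⊥ ∧ Ideal.absNorm I = 1} : ℕ) : ℤ) = 1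
    rw [h1, Nat.cast_one]
  have hFm : F.IsMultiplicative := by
    constructor
    · exact hFone
    · intro m n hmn
      rcases eq_or_ne m 0 with rfl | hm
      · rw [Nat.coprime_zero_left] at hmn
        subst hmn
        simp [F.map_zero, hFone]
      rcases eq_or_ne n 0 with rfl | hn
      · rw [Nat.coprime_zero_right] at hmn
        subst hmn
        simp [F.map_zero, hFone]
      show ((Nat.card _ : ℕ) : ℤ) = ((Nat.card _ : ℕ) : ℤ) * ((Nat.card _ : ℕ) : ℤ)
      rw [← Nat.cast_mul, aux_card_mul hmn]
  have hGm : G.IsMultiplicative :=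
    hχam.mul ArithmeticFunction.isMultiplicative_zeta.natCast
  have hGapp : ∀ N : ℕ, G N = ∑ a ∈ N.divisors, χ a := by
    intro N
    rw [hG, ArithmeticFunction.coe_mul_zeta_apply]
    apply Finset.sum_congr rfl
    intro a ha
    have : a ≠ 0 := Nat.pos_of_mem_divisors ha |>.ne'
    simp [hχa, this]
  have hFG : F = G := by
    rw [ArithmeticFunction.IsMultiplicative.eq_iff_eq_on_prime_powers F hFm G hGm]
    intro p i hp
    have hGpp : G (p ^ i) = ∑ x ∈ Finset.range (i + 1), χ p ^ x := by
      rw [hGapp, Nat.sum_divisors_prime_pow hp]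
      exact Finset.sum_congr rfl fun x _ => hχpow p x
    have hFpp : F (p ^ i)
        = ((Nat.card {I : Ideal (𝓞 K) // I ≠ ⊥ ∧ Ideal.absNorm I = p ^ i} : ℕ) : ℤ) := rfl
    rcases aux_classify hrk hp with ⟨P, Q, hPp, hQp, hPQ, hspan, hPn, hQn⟩ |
      ⟨P, hPp, hspan, hPn⟩ | hpr
    · have hχp : χ p = 1 := hsplit p hp
        ⟨P, Q, Ideal.isPrime_of_prime hPp, Ideal.isPrime_of_prime hQp, hPQ, hspan⟩
      rw [hFpp, hGpp, aux_card_split hp hPp hQp hPQ hspan hPn hQn i, hχp]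
      simp
    · have hχp : χ p = 0 := hram p hp ⟨P, Ideal.isPrime_of_prime hPp, hspan⟩
      rw [hFpp, hGpp, aux_card_ram hp hPp hspan hPn i, hχp]
      rw [zero_geom_sum]
      simp
    · have hχp : χ p = -1 := hinert p hp hpr
      have hn2 : Ideal.absNorm (Ideal.span {(p : 𝓞 K)}) = p ^ 2 := by
        rw [aux_norm_span_natCast, hrk]
      rw [hFpp, hGpp, aux_card_inert hp hpr hn2 i, hχp, neg_one_geom_sum]
      by_cases hev : Even i <;> simp [hev, Nat.even_add_one]
  intro N hN
  calc (Nat.card {I : Ideal (𝓞 K) // I ≠ ⊥ ∧ Ideal.absNorm I = N} : ℤ) = F N := rfl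
    _ = G N := by rw [hFG]
    _ = ∑ a ∈ N.divisors, χ a := hGapp N
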